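/- Let P_0, ..., P_n be n+1 points in general position in R^n (i.e., the vectors P_i - P_0 for i=1,...,n are linearly independent), and let P_{i,i+1} = (1-ξ_i)P_i + ξ_i P_{i+1} be points on the lines P_i P_{i+1} (indices mod n+1), with each ξ_i ∉ {0,1}. Then the n+1 points P_{i,i+1} lie in an (n-1)-dimensional affine subspace if and only if ∏_{i=0}^{n} ξ_i/(1-ξ_i) = (-1)^{n+1}. -/

import Mathlib

open Fin.NatCast in
lemma menelaus_perm_aux {m : ℕ} (σ : Equiv.Perm (Fin (m + 2)))
    (h : ∀ i, σ i = i ∨ σ i = i + 1) : σ = 1 ∨ σ = finRotate (m + 2) := by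
  by_cases hall : ∀ i, σ i = i
  · left; ext i; simp [hall]
  · right
    push_neg at hall
    obtain ⟨i0, hi0⟩ := hall
    have h0 : σ i0 = i0 + 1 := (h i0).resolve_left hi0
    have hne : ∀ x : Fin (m + 2), x ≠ x + 1 := by
      intro x hx
      have : (0 : Fin (m + 2)) = 1 := by
        have := add_left_cancel (a := x) (b := (0 : Fin (m+2))) (c := 1) (by simpa using hx)
        exact this
      simp [Fin.ext_iff] at this
    have key : ∀ k : ℕ, σ (i0 + k) = i0 + k + 1 := by
      intro k
      induction k with
      | zero => simpa using h0
      | succ k ih =>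
        have hcast : ((k + 1 : ℕ) : Fin (m + 2)) = (k : Fin (m + 2)) + 1 := by push_cast; ring
        rw [hcast, ← add_assoc]
        rcases h (i0 + k + 1) with hc | hc
        · exfalso
          have : i0 + (k : Fin (m+2)) = i0 + k + 1 := σ.injective (by rw [ih, hc])
          exact hne _ this
        · exact hc
    ext j
    have hj := key ((j - i0 : Fin (m + 2)) : ℕ)
    rw [Fin.cast_val_eq_self] at hj
    have hj' : i0 + (j - i0) = j := by abel
    rw [hj'] at hj
    rw [hj, finRotate_succ_apply]

lemma menelaus_det_aux {m : ℕ} (ξ : Fin (m + 2) → ℝ)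
    (M : Matrix (Fin (m + 2)) (Fin (m + 2)) ℝ)
    (hM : ∀ i j, M i j = if j = i then 1 - ξ i else if j = i + 1 then ξ i else 0) :
    M.det = ∏ i, (1 - ξ i) + (-1) ^ (m + 1) * ∏ i, ξ i := by
  have hne : ∀ x : Fin (m + 2), x ≠ x + 1 := by
    intro x hx
    have : (0 : Fin (m + 2)) = 1 := add_left_cancel (a := x) (by simpa using hx)
    simp [Fin.ext_iff] at this
  rw [← Matrix.det_transpose, Matrix.det_apply']
  have hterm : ∀ σ : Equiv.Perm (Fin (m + 2)),
      σ ∈ (Finset.univ : Finset (Equiv.Perm (Fin (m + 2)))) →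
      σ ∉ ({1, finRotate (m + 2)} : Finset (Equiv.Perm (Fin (m + 2)))) →
      (Equiv.Perm.sign σ : ℝ) * ∏ i, M.transpose (σ i) i = 0 := by
    intro σ _ hσ
    simp only [Finset.mem_insert, Finset.mem_singleton, not_or] at hσ
    have : ∏ i, M.transpose (σ i) i = 0 := by
      by_contra hp
      have hfac := Finset.prod_ne_zero_iff.mp hp
      have hstep : ∀ i, σ i = i ∨ σ i = i + 1 := by
        intro i
        have := hfac i (Finset.mem_univ i)
        rw [Matrix.transpose_apply, hM] at this
        by_contra hcon
        push_neg at hcon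
        simp [hcon.1, hcon.2] at this
      rcases menelaus_perm_aux σ hstep with h1 | h2
      · exact hσ.1 h1
      · exact hσ.2 h2
    rw [this, mul_zero]
  rw [← Finset.sum_subset (Finset.subset_univ _) hterm]
  have hne2 : (1 : Equiv.Perm (Fin (m + 2))) ≠ finRotate (m + 2) := by
    intro hEq
    have : (0 : Fin (m + 2)) = 0 + 1 := by
      conv_lhs => rw [show (0 : Fin (m+2)) = (1 : Equiv.Perm (Fin (m+2))) 0 from rfl, hEq,
        finRotate_succ_apply]
    exact hne 0 this
  rw [Finset.sum_pair hne2]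
  have t1 : (Equiv.Perm.sign (1 : Equiv.Perm (Fin (m + 2))) : ℝ) *
      ∏ i, M.transpose ((1 : Equiv.Perm (Fin (m+2))) i) i = ∏ i, (1 - ξ i) := by
    simp only [Equiv.Perm.sign_one, Units.val_one, Int.cast_one, one_mul]
    refine Finset.prod_congr rfl fun i _ => ?_
    simp [Matrix.transpose_apply, hM]
  have t2 : (Equiv.Perm.sign (finRotate (m + 2)) : ℝ) *
      ∏ i, M.transpose ((finRotate (m + 2)) i) i = (-1) ^ (m + 1) * ∏ i, ξ i := by
    rw [sign_finRotate]
    congr 1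
    · push_cast; ring
    refine Finset.prod_congr rfl fun i _ => ?_
    rw [finRotate_succ_apply, Matrix.transpose_apply, hM]
    simp [(hne i).symm]
  rw [t1, t2]


/-- Generalized Menelaus theorem: the points `Q i = (1-ξ i) • P i + ξ i • P (i+1)`
on the edges of a simplex in general position lie in an `(n-1)`-dimensional affine
subspace iff `∏ ξ i / (1 - ξ i) = (-1)^(n+1)`. -/
theorem generalized_menelaus (n : ℕ) (hn : 1 ≤ n)
    (P : Fin (n + 1) → (Fin n → ℝ))
    (hgen : LinearIndependent ℝ (fun i : Fin n => P i.succ - P 0))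
    (ξ : Fin (n + 1) → ℝ) (hξ0 : ∀ i, ξ i ≠ 0) (hξ1 : ∀ i, ξ i ≠ 1)
    (Q : Fin (n + 1) → (Fin n → ℝ))
    (hQ : ∀ i, Q i = (1 - ξ i) • P i + ξ i • P (i + 1)) :
    (∃ s : AffineSubspace ℝ (Fin n → ℝ), (∀ i, Q i ∈ s) ∧
      Module.finrank ℝ s.direction ≤ n - 1) ↔
    ∏ i, ξ i / (1 - ξ i) = (-1 : ℝ) ^ (n + 1) := by
  obtain ⟨m, rfl⟩ : ∃ m, n = m + 1 := ⟨n - 1, by omega⟩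
  -- the equiv between Fin (m + 1) and points ≠ 0
  let e : Fin (m + 1) ≃ { x : Fin ((m + 1) + 1) // x ≠ 0 } :=
    { toFun := fun i => ⟨i.succ, Fin.succ_ne_zero i⟩
      invFun := fun x => x.1.pred x.2
      left_inv := fun i => by simp
      right_inv := fun x => by simp }
  -- P is affinely independent
  have hPai : AffineIndependent ℝ P := by
    rw [affineIndependent_iff_linearIndependent_vsub ℝ P 0]
    rw [← linearIndependent_equiv e]
    exact hgen
  -- affine basis
  have hPtop : affineSpan ℝ (Set.range P) = ⊤ := by
    rw [hPai.affineSpan_eq_top_iff_card_eq_finrank_add_one]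
    simp [Module.finrank_fin_fun]
  let b : AffineBasis (Fin ((m + 1) + 1)) ℝ (Fin (m + 1) → ℝ) := ⟨P, hPai, hPtop⟩
  have hb : ∀ i, b i = P i := fun _ => rfl
  set M := b.toMatrix Q with hMdef
  -- compute the matrix entries
  have hM : ∀ i j, M i j = if j = i then 1 - ξ i else if j = i + 1 then ξ i else 0 := by
    intro i j
    have hQL : Q i = AffineMap.lineMap (P i) (P (i + 1)) (ξ i) := by
      rw [hQ i, AffineMap.lineMap_apply_module]
    rw [hMdef, AffineBasis.toMatrix_apply, hQL, AffineMap.apply_lineMap]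
    have hc1 : b.coord j (P i) = if j = i then 1 else 0 := by
      rw [← hb i, AffineBasis.coord_apply]
    have hc2 : b.coord j (P (i + 1)) = if j = i + 1 then 1 else 0 := by
      rw [← hb (i + 1), AffineBasis.coord_apply]
    have hne : (i : Fin ((m + 1) + 1)) ≠ i + 1 := by
      intro hx
      have : (0 : Fin ((m + 1) + 1)) = 1 := add_left_cancel (a := i) (by simpa using hx)
      simp [Fin.ext_iff] at this
    rw [AffineMap.lineMap_apply_module, hc1, hc2]
    by_cases h1 : j = i
    · subst h1
      simp [hne.symm, if_neg (fun h => hne h)]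
    · by_cases h2 : j = i + 1
      · subst h2
        simp [h1]
      · simp [h1, h2]
  -- determinant value
  have hdet : M.det = ∏ i, (1 - ξ i) + (-1) ^ (m + 1) * ∏ i, ξ i :=
    menelaus_det_aux ξ M hM
  -- affine independence iff det ≠ 0
  have hAI : AffineIndependent ℝ Q ↔ M.det ≠ 0 := by
    constructor
    · intro hQi
      have htop : affineSpan ℝ (Set.range Q) = ⊤ := by
        rw [hQi.affineSpan_eq_top_iff_card_eq_finrank_add_one]
        simp [Module.finrank_fin_fun]
      have := (b.isUnit_toMatrix_iff Q).mpr ⟨hQi, htop⟩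
      rw [Matrix.isUnit_iff_isUnit_det] at this
      exact isUnit_iff_ne_zero.mp this
    · intro hdet'
      exact ((b.isUnit_toMatrix_iff Q).mp
        ((Matrix.isUnit_iff_isUnit_det _).mpr (isUnit_iff_ne_zero.mpr hdet'))).1
  -- LHS iff not affinely independent
  have hLHS : (∃ s : AffineSubspace ℝ (Fin (m + 1) → ℝ), (∀ i, Q i ∈ s) ∧
      Module.finrank ℝ s.direction ≤ (m + 1) - 1) ↔ ¬ AffineIndependent ℝ Q := by
    constructor
    · rintro ⟨s, hmem, hrank⟩ hQi
      have hli : LinearIndependent ℝ (fun i : Fin (m + 1) => Q i.succ - Q 0) := by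
        rw [affineIndependent_iff_linearIndependent_vsub ℝ Q 0,
          ← linearIndependent_equiv e] at hQi
        exact hQi
      have hsub : ∀ i : Fin (m + 1), Q i.succ - Q 0 ∈ s.direction := fun i =>
        AffineSubspace.vsub_mem_direction (hmem i.succ) (hmem 0)
      let w : Fin (m + 1) → s.direction := fun i => ⟨Q i.succ - Q 0, hsub i⟩
      have hw : LinearIndependent ℝ w := by
        apply LinearIndependent.of_comp s.direction.subtype
        exact hli
      have := hw.fintype_card_le_finrank
      simp only [Fintype.card_fin] at this
      omega
    · intro hQi
      refine ⟨affineSpan ℝ (Set.range Q), fun i => subset_affineSpan ℝ _ ⟨i, rfl⟩, ?_⟩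
      rw [direction_affineSpan, vectorSpan_range_eq_span_range_vsub_right ℝ Q 0]
      have hdep : ¬ LinearIndependent ℝ (fun i : Fin (m + 1) => Q i.succ - Q 0) := by
        intro hli
        apply hQi
        rw [affineIndependent_iff_linearIndependent_vsub ℝ Q 0,
          ← linearIndependent_equiv e]
        exact hli
      have hsp : Submodule.span ℝ (Set.range fun i : Fin ((m + 1)+1) => Q i -ᵥ Q 0) =
          Submodule.span ℝ (Set.range fun i : Fin (m + 1) => Q i.succ - Q 0) := by
        apply le_antisymm
        · rw [Submodule.span_le]
          rintro x ⟨i, rfl⟩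
          rcases eq_or_ne i 0 with rfl | hi
          · simp
          · have hQQ : Q i -ᵥ Q 0 = Q ((i.pred hi).succ) - Q 0 := by simp
            show Q i -ᵥ Q 0 ∈ _
            rw [hQQ]
            exact Submodule.subset_span ⟨i.pred hi, rfl⟩
        · apply Submodule.span_mono
          rintro x ⟨i, rfl⟩
          exact ⟨i.succ, rfl⟩
      rw [hsp]
      have hle : Module.finrank ℝ (Submodule.span ℝ
          (Set.range fun i : Fin (m + 1) => Q i.succ - Q 0)) ≤ (m + 1) := by
        simpa [Set.finrank] using finrank_range_le_card (fun i : Fin (m + 1) => Q i.succ - Q 0)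
      have hneq : Module.finrank ℝ (Submodule.span ℝ
          (Set.range fun i : Fin (m + 1) => Q i.succ - Q 0)) ≠ (m + 1) := by
        intro hEq
        apply hdep
        rw [linearIndependent_iff_card_eq_finrank_span]
        simpa [Set.finrank] using hEq.symm
      omega
  rw [hLHS, hAI, not_not, hdet]
  -- now pure algebra
  have hb0 : ∏ i, (1 - ξ i) ≠ 0 :=
    Finset.prod_ne_zero_iff.mpr fun i _ => sub_ne_zero_of_ne (fun h => hξ1 i h.symm)
  rw [Finset.prod_div_distrib, div_eq_iff hb0]
  have hpow : ((-1 : ℝ)) ^ ((m + 1) + 1) = -(-1 : ℝ) ^ (m + 1) := by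
    rw [pow_succ]; ring
  rw [hpow]
  obtain hs | hs : ((-1 : ℝ)) ^ (m + 1) = 1 ∨ ((-1 : ℝ)) ^ (m + 1) = -1 :=
    (Nat.even_or_odd (m + 1)).imp (fun h => h.neg_one_pow) (fun h => h.neg_one_pow)
  · rw [hs]
    constructor <;> intro h <;> linarith
  · rw [hs]
    constructor <;> intro h <;> linarith
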